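/- Fix c > 0 and set u_n := (c+2)^{|n|·sin((π/2)·log₂(1+|n|))} for n ∈ ℤ. Let U be the bounded operator on ℓ²(ℤ,ℂ) determined by (Uf)(n) = (u_n/u_{n−1})·f(n−1) for all f ∈ ℓ²(ℤ,ℂ) and n ∈ ℤ. Then U is bounded with bounded inverse, and S₊(c⁻¹U) = S₊(c⁻¹(U*)⁻¹) = S₊(c⁻¹U⁻¹) = S₊(c⁻¹U*) = {0}; explicitly, for each T among U, U⁻¹, U*, (U*)⁻¹, the only f ∈ ℓ²(ℤ,ℂ) such that for every a > 1 there exists C ≥ 0 with ‖T^N f‖ ≤ C·(c·a)^N for all N ∈ ℕ is f = 0. -/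

import Mathlib

noncomputable section
open ContinuousLinearMap Real

/-- The Hilbert space `ℓ²(ℤ, ℂ)` of square-summable two-sided complex sequences. -/
abbrev l2 : Type := lp (fun _ : ℤ => ℂ) 2

/-- The set `S₊(c⁻¹T)` of vectors whose orbit grows slower than every `(c·a)^N`, `a > 1`. -/
def Splus (c : ℝ) (T : l2 →L[ℂ] l2) : Set l2 :=
  {f | ∀ a : ℝ, 1 < a → ∃ C : ℝ, 0 ≤ C ∧ ∀ N : ℕ, ‖(T ^ N) f‖ ≤ C * (c * a) ^ N}

open scoped ENNReal

set_option maxHeartbeats 1000000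

section Aux

lemma sin_lip' (x y : ℝ) : |Real.sin x - Real.sin y| ≤ |x - y| := by
  rw [Real.sin_sub_sin]
  have h1 : |Real.sin ((x-y)/2)| ≤ |(x-y)/2| := Real.abs_sin_le_abs
  have h2 : |Real.cos ((x+y)/2)| ≤ 1 := Real.abs_cos_le_one _
  calc |2 * Real.sin ((x-y)/2) * Real.cos ((x+y)/2)|
      = 2 * |Real.sin ((x-y)/2)| * |Real.cos ((x+y)/2)| := by
        rw [abs_mul, abs_mul]; norm_num
    _ ≤ 2 * |(x-y)/2| * 1 := by
        apply mul_le_mul _ h2 (abs_nonneg _) (by positivity)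
        nlinarith [abs_nonneg ((x-y)/2)]
    _ = |x - y| := by rw [abs_div]; norm_num; ring

lemma hstep' (x : ℝ) (hx : 0 ≤ x) :
    |(x+1) * Real.sin (π/2 * Real.logb 2 (1+(x+1))) - x * Real.sin (π/2 * Real.logb 2 (1+x))| ≤ 4 := by
  have hlog2 : (0.6931471803 : ℝ) < Real.log 2 := Real.log_two_gt_d9
  have hpi : π < 3.15 := by
    have := Real.pi_lt_d2
    norm_num at this ⊢; linarith
  have h1x : (0:ℝ) < 1 + x := by linarith
  have h21 : (1:ℝ) + (x+1) = 2 + x := by ring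
  rw [h21]
  set A := π/2 * Real.logb 2 (2+x) with hA
  set B := π/2 * Real.logb 2 (1+x) with hB
  have hAB : |A - B| ≤ π/2 * (1/(1+x)) / Real.log 2 := by
    have hd0 : 0 ≤ Real.log (2+x) - Real.log (1+x) :=
      sub_nonneg.2 (Real.log_le_log h1x (by linarith))
    have hd1 : Real.log (2+x) - Real.log (1+x) ≤ 1/(1+x) := by
      rw [← Real.log_div (by linarith) (by linarith)]
      have h := Real.log_le_sub_one_of_pos (show (0:ℝ) < (2+x)/(1+x) by positivity)
      have heq : (2+x)/(1+x) - 1 = 1/(1+x) := by field_simp; norm_num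
      linarith
    have hABeq : A - B = (π/2 / Real.log 2) * (Real.log (2+x) - Real.log (1+x)) := by
      simp only [hA, hB, Real.logb]; ring
    have hc : (0:ℝ) ≤ π/2 / Real.log 2 := by positivity
    rw [hABeq, abs_of_nonneg (by positivity)]
    calc (π/2 / Real.log 2) * (Real.log (2+x) - Real.log (1+x))
        ≤ (π/2 / Real.log 2) * (1/(1+x)) := mul_le_mul_of_nonneg_left hd1 hc
      _ = π/2 * (1/(1+x)) / Real.log 2 := by ring
  have key : x * (π/2 * (1/(1+x)) / Real.log 2) ≤ 3 := by
    have heq : x * (π/2 * (1/(1+x)) / Real.log 2) = x * π / (2 * (1+x) * Real.log 2) := by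
      field_simp
    rw [heq, div_le_iff₀ (by positivity)]
    nlinarith [mul_le_mul_of_nonneg_left hpi.le hx]
  have hmain : (x+1) * Real.sin A - x * Real.sin B = Real.sin A + x * (Real.sin A - Real.sin B) := by
    ring
  rw [hmain]
  calc |Real.sin A + x * (Real.sin A - Real.sin B)|
      ≤ |Real.sin A| + x * |Real.sin A - Real.sin B| := by
        refine (abs_add_le _ _).trans ?_
        rw [abs_mul, abs_of_nonneg hx]
    _ ≤ 1 + x * |A - B| :=
        add_le_add (Real.abs_sin_le_one _) (mul_le_mul_of_nonneg_left (sin_lip' A B) hx)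
    _ ≤ 1 + x * (π/2 * (1/(1+x)) / Real.log 2) :=
        add_le_add (le_refl _) (mul_le_mul_of_nonneg_left hAB hx)
    _ ≤ 1 + 3 := by linarith
    _ = 4 := by norm_num

lemma two_toReal' : (2 : ℝ≥0∞).toReal = 2 := by norm_num

lemma l2_summable_sq (f : l2) : Summable fun n : ℤ => ‖f n‖ ^ (2:ℝ) := by
  have := (lp.memℓp f).summable (p := 2) (by rw [two_toReal']; norm_num)
  rwa [two_toReal'] at this

lemma l2_norm_sq (f : l2) : ‖f‖ ^ (2:ℝ) = ∑' n : ℤ, ‖f n‖ ^ (2:ℝ) := by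
  have := lp.norm_rpow_eq_tsum (p := 2) (by rw [two_toReal']; norm_num) f
  rwa [two_toReal'] at this

lemma shift_mem (b : ℤ → ℝ) (d : ℤ) (B : ℝ) (hB : ∀ n, |b n| ≤ B) (f : l2) :
    Memℓp (fun n => (b n : ℂ) * f (n + d)) 2 := by
  have hB0 : 0 ≤ B := (abs_nonneg _).trans (hB 0)
  apply memℓp_gen
  rw [two_toReal']
  have hsum : Summable fun n : ℤ => ‖f (n + d)‖ ^ (2:ℝ) :=
    (Equiv.addRight d).summable_iff.2 (l2_summable_sq f)
  refine Summable.of_nonneg_of_le (fun n => by positivity) (fun n => ?_) (hsum.mul_left (B ^ (2:ℝ)))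
  have h1 : ‖(b n : ℂ) * f (n + d)‖ = |b n| * ‖f (n + d)‖ := by
    rw [norm_mul, Complex.norm_real, Real.norm_eq_abs]
  rw [h1, ← Real.mul_rpow hB0 (norm_nonneg _)]
  apply Real.rpow_le_rpow (by positivity) _ (by norm_num)
  exact mul_le_mul_of_nonneg_right (hB n) (norm_nonneg _)

def shiftFun (b : ℤ → ℝ) (d : ℤ) (B : ℝ) (hB : ∀ n, |b n| ≤ B) (f : l2) : l2 :=
  ⟨fun n => (b n : ℂ) * f (n + d), shift_mem b d B hB f⟩

lemma shiftFun_apply (b : ℤ → ℝ) (d : ℤ) (B : ℝ) (hB : ∀ n, |b n| ≤ B) (f : l2) (n : ℤ) :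
    shiftFun b d B hB f n = (b n : ℂ) * f (n + d) := rfl

def shiftOp (b : ℤ → ℝ) (d : ℤ) (B : ℝ) (hB : ∀ n, |b n| ≤ B) : l2 →L[ℂ] l2 :=
  LinearMap.mkContinuous
    { toFun := shiftFun b d B hB
      map_add' := fun f g => by
        apply lp.ext; funext n
        simp only [lp.coeFn_add, Pi.add_apply, shiftFun_apply]
        ring
      map_smul' := fun c f => by
        apply lp.ext; funext n
        simp only [lp.coeFn_smul, Pi.smul_apply, shiftFun_apply, smul_eq_mul,
          RingHom.id_apply]
        ring }
    B
    (by
      intro f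
      have hB0 : 0 ≤ B := (abs_nonneg _).trans (hB 0)
      apply lp.norm_le_of_tsum_le (p := 2) (by rw [two_toReal']; norm_num)
        (by positivity)
      rw [two_toReal']
      have hsum : Summable fun n : ℤ => ‖f (n + d)‖ ^ (2:ℝ) :=
        (Equiv.addRight d).summable_iff.2 (l2_summable_sq f)
      have hle : ∀ n : ℤ, ‖shiftFun b d B hB f n‖ ^ (2:ℝ) ≤ B ^ (2:ℝ) * ‖f (n + d)‖ ^ (2:ℝ) := by
        intro n
        rw [shiftFun_apply]
        have h1 : ‖(b n : ℂ) * f (n + d)‖ = |b n| * ‖f (n + d)‖ := by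
          rw [norm_mul, Complex.norm_real, Real.norm_eq_abs]
        rw [h1, ← Real.mul_rpow hB0 (norm_nonneg _)]
        apply Real.rpow_le_rpow (by positivity) _ (by norm_num)
        exact mul_le_mul_of_nonneg_right (hB n) (norm_nonneg _)
      calc (∑' n : ℤ, ‖shiftFun b d B hB f n‖ ^ (2:ℝ))
          ≤ ∑' n : ℤ, B ^ (2:ℝ) * ‖f (n + d)‖ ^ (2:ℝ) := by
            apply Summable.tsum_le_tsum hle _ (hsum.mul_left _)
            · refine Summable.of_nonneg_of_le (fun n => by positivity) hle (hsum.mul_left _)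
        _ = B ^ (2:ℝ) * ∑' n : ℤ, ‖f (n + d)‖ ^ (2:ℝ) := tsum_mul_left
        _ = B ^ (2:ℝ) * ∑' n : ℤ, ‖f n‖ ^ (2:ℝ) := by
            congr 1
            exact (Equiv.addRight d).tsum_eq (fun n => ‖f n‖ ^ (2:ℝ))
        _ = B ^ (2:ℝ) * ‖f‖ ^ (2:ℝ) := by rw [l2_norm_sq]
        _ = (B * ‖f‖) ^ (2:ℝ) := (Real.mul_rpow hB0 (norm_nonneg _)).symm)

lemma shiftOp_apply (b : ℤ → ℝ) (d : ℤ) (B : ℝ) (hB : ∀ n, |b n| ≤ B) (f : l2) (n : ℤ) :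
    shiftOp b d B hB f n = (b n : ℂ) * f (n + d) := rfl

lemma pow_apply_gen (T : l2 →L[ℂ] l2) (v : ℤ → ℝ) (hv : ∀ n, v n ≠ 0) (d : ℤ)
    (hT : ∀ (f : l2) (n : ℤ), T f n = ((v n / v (n + d) : ℝ) : ℂ) * f (n + d)) :
    ∀ (N : ℕ) (f : l2) (n : ℤ),
      (T ^ N) f n = ((v n / v (n + N * d) : ℝ) : ℂ) * f (n + N * d) := by
  intro N
  induction N with
  | zero =>
    intro f n
    simp [div_self (hv n)]
  | succ N ih =>
    intro f n
    rw [pow_succ, ContinuousLinearMap.mul_apply, ih (T f) n, hT f (n + N * d)]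
    have hidx : n + N * d + d = n + (N + 1 : ℕ) * d := by push_cast; ring
    rw [hidx]
    push_cast
    rw [← mul_assoc]
    congr 1
    rw [div_mul_div_comm]
    rw [div_eq_div_iff]
    · ring
    · exact mul_ne_zero (by exact_mod_cast Complex.ofReal_ne_zero.2 (hv _))
        (by exact_mod_cast Complex.ofReal_ne_zero.2 (hv _))
    · exact_mod_cast Complex.ofReal_ne_zero.2 (hv _)

lemma splus_zero (c : ℝ) (hc : 0 < c) (T : l2 →L[ℂ] l2)
    (h : ∀ f : l2, f ≠ 0 → ∃ ε : ℝ, 0 < ε ∧ ∀ M : ℕ, ∃ N : ℕ, M ≤ N ∧ ε * (c + 2) ^ N ≤ ‖(T ^ N) f‖) :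
    Splus c T = {0} := by
  ext f
  simp only [Set.mem_singleton_iff]
  constructor
  · intro hf
    by_contra hne
    obtain ⟨ε, hε, hN⟩ := h f hne
    obtain ⟨C, hC0, hC⟩ := hf (1 + c⁻¹) (by have := inv_pos.2 hc; linarith)
    have hca : c * (1 + c⁻¹) = c + 1 := by field_simp
    rw [hca] at hC
    have hr1 : (c + 1) / (c + 2) < 1 := (div_lt_one (by linarith)).2 (by linarith)
    have hr0 : 0 ≤ (c + 1) / (c + 2) := by positivity
    have htend : Filter.Tendsto (fun N : ℕ => C * ((c + 1) / (c + 2)) ^ N)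
        Filter.atTop (nhds 0) := by
      simpa using (tendsto_pow_atTop_nhds_zero_of_lt_one hr0 hr1).const_mul C
    have hev : ∀ᶠ N : ℕ in Filter.atTop, C * ((c + 1) / (c + 2)) ^ N < ε :=
      htend.eventually (gt_mem_nhds hε)
    obtain ⟨M, hM⟩ := Filter.eventually_atTop.1 hev
    obtain ⟨N, hNM, hNbig⟩ := hN M
    have h1 : ε * (c + 2) ^ N ≤ C * (c + 1) ^ N := hNbig.trans (hC N)
    have h2 : ε ≤ C * ((c + 1) / (c + 2)) ^ N := by
      rw [div_pow, ← mul_div_assoc, le_div_iff₀ (by positivity)]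
      linarith [h1]
    exact absurd h2 (not_le.2 (hM N hNM))
  · rintro rfl
    intro a ha
    exact ⟨0, le_refl 0, fun N => by simp⟩

lemma sin_val1 (m : ℕ) : Real.sin (π/2 * ((4*m+1 : ℕ) : ℝ)) = 1 := by
  have h : π/2 * ((4*m+1 : ℕ) : ℝ) = π/2 + (m : ℤ) * (2 * π) := by push_cast; ring
  rw [h, Real.sin_add_int_mul_two_pi, Real.sin_pi_div_two]

lemma sin_val3 (m : ℕ) : Real.sin (π/2 * ((4*m+3 : ℕ) : ℝ)) = -1 := by
  have h : π/2 * ((4*m+3 : ℕ) : ℝ) = (π/2 + π) + (m : ℤ) * (2 * π) := by push_cast; ring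
  rw [h, Real.sin_add_int_mul_two_pi, Real.sin_add_pi, Real.sin_pi_div_two]

lemma logb_val (j : ℕ) (x : ℝ) (hx : x = 2^j - 1) : Real.logb 2 (1 + x) = j := by
  rw [hx]
  have h : (1:ℝ) + (2^j - 1) = 2^j := by ring
  rw [h, Real.logb_pow, Real.logb_self_eq_one (by norm_num), mul_one]

lemma pick (k : ℤ) (M r : ℕ) : ∃ (m N : ℕ), M ≤ N ∧ (N:ℤ) = 2^(4*m+r) - 1 + k := by
  refine ⟨M + k.natAbs + 1, (2^(4*(M + k.natAbs + 1)+r) - 1 + k).toNat, ?_, ?_⟩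
  · have h2 : ((4*(M + k.natAbs + 1)+r : ℕ) : ℤ) < 2^(4*(M + k.natAbs + 1)+r) := by
      exact_mod_cast Nat.lt_two_pow_self
    omega
  · have h2 : ((4*(M + k.natAbs + 1)+r : ℕ) : ℤ) < 2^(4*(M + k.natAbs + 1)+r) := by
      exact_mod_cast Nat.lt_two_pow_self
    omega

lemma l2_exists_ne (f : l2) (hf : f ≠ 0) : ∃ k, f k ≠ 0 := by
  by_contra h
  push_neg at h
  exact hf (lp.ext (funext fun k => by simp [h k]))

lemma splus_case (c : ℝ) (hc : 0 < c) (u : ℤ → ℝ) (hupos : ∀ n, 0 < u n)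
    (hval : ∀ (n : ℤ) (j : ℕ), |(n:ℝ)| = 2^j - 1 →
      u n = (c+2) ^ ((2^j - 1 : ℝ) * Real.sin (π/2 * (j:ℝ))))
    (T : l2 →L[ℂ] l2) (v : ℤ → ℝ) (d : ℤ) (hd : d = 1 ∨ d = -1) (r : ℕ)
    (hvu : (v = u ∧ r = 1) ∨ (v = (fun n => (u n)⁻¹) ∧ r = 3))
    (hT : ∀ (f : l2) (n : ℤ), T f n = ((v n / v (n + d) : ℝ) : ℂ) * f (n + d)) :
    Splus c T = {0} := by
  have hK0 : (0:ℝ) < c + 2 := by linarith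
  have hvpos : ∀ n, 0 < v n := by
    rcases hvu with ⟨rfl, -⟩ | ⟨rfl, -⟩
    · exact hupos
    · exact fun n => inv_pos.2 (hupos n)
  have hv : ∀ n, v n ≠ 0 := fun n => (hvpos n).ne'
  apply splus_zero c hc T
  intro f hf
  obtain ⟨k, hk⟩ := l2_exists_ne f hf
  refine ⟨‖f k‖ * (v k)⁻¹ * (c+2) ^ (-(d:ℝ) * (k:ℝ)),
    by have h1 : 0 < ‖f k‖ := norm_pos_iff.2 hk; have h2 := hvpos k; positivity, ?_⟩
  intro M
  obtain ⟨m, N, hMN, hNz⟩ := pick (d * k) M r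
  set j : ℕ := 4*m + r with hj
  set n₀ : ℤ := -d * (2^j - 1) with hn₀
  have h2j : (1:ℤ) ≤ 2^j := one_le_pow₀ (by norm_num)
  have hd2 : d * d = 1 := by rcases hd with rfl | rfl <;> norm_num
  have hidx : n₀ + (N:ℤ) * d = k := by
    have h : (N:ℤ) * d = (2^j - 1) * d + d * k * d := by rw [hNz]; ring
    rw [hn₀, h]
    rcases hd with rfl | rfl <;> ring
  have habs : |((n₀:ℤ):ℝ)| = 2^j - 1 := by
    have h : ((n₀:ℤ):ℝ) = -(d:ℝ) * ((2:ℝ)^j - 1) := by rw [hn₀]; push_cast; ring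
    rw [h]
    have h2r : (1:ℝ) ≤ (2:ℝ)^j := one_le_pow₀ (by norm_num)
    rcases hd with rfl | rfl <;> push_cast <;>
      simp [abs_of_nonneg, abs_of_nonpos, sub_nonneg, h2r]
  have hNreal : ((2:ℝ)^j - 1) = (N:ℝ) - (d:ℝ) * (k:ℝ) := by
    have h := congrArg (Int.cast : ℤ → ℝ) hNz
    push_cast at h
    linarith
  have hvn0 : v n₀ = (c+2) ^ ((N:ℝ) - (d:ℝ) * (k:ℝ)) := by
    rcases hvu with ⟨rfl, rfl⟩ | ⟨rfl, rfl⟩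
    · rw [hval n₀ j habs]
      rw [show ((j:ℕ):ℝ) = ((4*m+1 : ℕ):ℝ) by rw [hj]]
      rw [sin_val1 m, mul_one, hNreal]
    · show (u n₀)⁻¹ = _
      rw [hval n₀ j habs]
      rw [show ((j:ℕ):ℝ) = ((4*m+3 : ℕ):ℝ) by rw [hj]]
      rw [sin_val3 m]
      rw [show ((2:ℝ)^j - 1) * (-1) = -((2:ℝ)^j - 1) by ring]
      rw [Real.rpow_neg hK0.le, inv_inv, hNreal]
  have hcoord : (T ^ N) f n₀ = ((v n₀ / v k : ℝ) : ℂ) * f k := by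
    rw [pow_apply_gen T v hv d hT N f n₀, hidx]
  have hnorm : ‖(T ^ N) f n₀‖ = (v n₀ / v k) * ‖f k‖ := by
    rw [hcoord, norm_mul, Complex.norm_real, Real.norm_eq_abs,
      abs_of_pos (div_pos (hvpos n₀) (hvpos k))]
  refine ⟨N, hMN, ?_⟩
  have hle : ‖(T ^ N) f n₀‖ ≤ ‖(T ^ N) f‖ :=
    lp.norm_apply_le_norm (by norm_num) _ n₀
  have heq : ‖f k‖ * (v k)⁻¹ * (c+2) ^ (-(d:ℝ) * (k:ℝ)) * (c + 2) ^ N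
      = (v n₀ / v k) * ‖f k‖ := by
    rw [hvn0]
    rw [show (N:ℝ) - (d:ℝ) * (k:ℝ) = -(d:ℝ) * (k:ℝ) + (N:ℝ) by ring]
    rw [Real.rpow_add hK0, Real.rpow_natCast]
    ring
  rw [heq, ← hnorm]
  exact hle

end Aux

/-- For the weighted bilateral shift `U` with weights
`u n = (c+2) ^ (|n|·sin((π/2)·log₂(1+|n|)))`, the operator `U` has a bounded inverse, and
`S₊(c⁻¹U) = S₊(c⁻¹(U*)⁻¹) = S₊(c⁻¹U⁻¹) = S₊(c⁻¹U*) = {0}`. -/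
theorem stmt8 (c : ℝ) (hc : 0 < c)
    (u : ℤ → ℝ)
    (hu : ∀ n : ℤ,
      u n = (c + 2) ^ (|(n : ℝ)| * Real.sin (Real.pi / 2 * Real.logb 2 (1 + |(n : ℝ)|))))
    (U : l2 →L[ℂ] l2)
    (hU : ∀ (f : l2) (n : ℤ), U f n = ((u n / u (n - 1) : ℝ) : ℂ) * f (n - 1)) :
    ∃ Uinv : l2 →L[ℂ] l2,
      U.comp Uinv = 1 ∧ Uinv.comp U = 1 ∧
      Splus c U = {0} ∧
      Splus c (adjoint Uinv) = {0} ∧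
      Splus c Uinv = {0} ∧
      Splus c (adjoint U) = {0} := by
  have hK0 : (0:ℝ) < c + 2 := by linarith
  have hK1 : (1:ℝ) ≤ c + 2 := by linarith
  set φ : ℤ → ℝ := fun n => |(n:ℝ)| * Real.sin (π/2 * Real.logb 2 (1 + |(n:ℝ)|)) with hφ
  have hu' : ∀ n, u n = (c+2) ^ (φ n) := hu
  have hupos : ∀ n, 0 < u n := fun n => by rw [hu']; exact Real.rpow_pos_of_pos hK0 _
  have hune : ∀ n, u n ≠ 0 := fun n => (hupos n).ne'
  -- the Lipschitz-type estimate on the exponents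
  have hdiff : ∀ n : ℤ, |φ n - φ (n-1)| ≤ 4 := by
    intro n
    rcases le_or_gt 1 n with h | h
    · have hge : (0:ℝ) ≤ ((n-1:ℤ):ℝ) := by
        exact_mod_cast (by omega : (0:ℤ) ≤ n - 1)
      have e2 : |((n-1:ℤ):ℝ)| = ((n-1:ℤ):ℝ) := abs_of_nonneg hge
      have e1 : |((n:ℤ):ℝ)| = ((n-1:ℤ):ℝ) + 1 := by
        rw [abs_of_nonneg (by push_cast at hge ⊢; linarith)]
        push_cast; ring
      simp only [hφ, e1, e2]
      exact hstep' _ hge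
    · have hle : n ≤ 0 := by omega
      have hge : (0:ℝ) ≤ -((n:ℤ):ℝ) := by
        simp only [neg_nonneg]
        exact_mod_cast hle
      have e1 : |((n:ℤ):ℝ)| = -((n:ℤ):ℝ) := abs_of_nonpos (by linarith)
      have e2 : |((n-1:ℤ):ℝ)| = -((n:ℤ):ℝ) + 1 := by
        rw [abs_of_nonpos (by push_cast; linarith)]
        push_cast; ring
      rw [abs_sub_comm]
      simp only [hφ, e1, e2]
      exact hstep' _ hge
  have hrat : ∀ n : ℤ, u n / u (n-1) ≤ (c+2)^(4:ℝ) ∧ u (n-1) / u n ≤ (c+2)^(4:ℝ) := by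
    intro n
    have hd := hdiff n
    have e : u n / u (n-1) = (c+2) ^ (φ n - φ (n-1)) := by
      rw [hu' n, hu' (n-1), ← Real.rpow_sub hK0]
    have e' : u (n-1) / u n = (c+2) ^ (φ (n-1) - φ n) := by
      rw [hu' n, hu' (n-1), ← Real.rpow_sub hK0]
    obtain ⟨hd1, hd2⟩ := abs_le.1 hd
    constructor
    · rw [e]; exact Real.rpow_le_rpow_of_exponent_le hK1 (by linarith)
    · rw [e']; exact Real.rpow_le_rpow_of_exponent_le hK1 (by linarith)
  set B : ℝ := (c+2)^(4:ℝ) with hBdef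
  have hb1 : ∀ n : ℤ, |u n / u (n+1)| ≤ B := by
    intro n
    rw [abs_of_pos (div_pos (hupos n) (hupos (n+1)))]
    have := (hrat (n+1)).2
    simpa using this
  have hb2 : ∀ n : ℤ, |u (n+1) / u n| ≤ B := by
    intro n
    rw [abs_of_pos (div_pos (hupos (n+1)) (hupos n))]
    have := (hrat (n+1)).1
    simpa using this
  have hb3 : ∀ n : ℤ, |u (n-1) / u n| ≤ B := by
    intro n
    rw [abs_of_pos (div_pos (hupos (n-1)) (hupos n))]
    exact (hrat n).2
  set Uinv : l2 →L[ℂ] l2 := shiftOp (fun n => u n / u (n+1)) 1 B hb1 with hUinvdef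
  set V1 : l2 →L[ℂ] l2 := shiftOp (fun n => u (n+1) / u n) 1 B hb2 with hV1def
  set V2 : l2 →L[ℂ] l2 := shiftOp (fun n => u (n-1) / u n) (-1) B hb3 with hV2def
  have hUinv_apply : ∀ (f : l2) (n : ℤ), Uinv f n = ((u n / u (n+1) : ℝ) : ℂ) * f (n+1) :=
    fun f n => rfl
  have hV1_apply : ∀ (f : l2) (n : ℤ), V1 f n = ((u (n+1) / u n : ℝ) : ℂ) * f (n+1) :=
    fun f n => rfl
  have hV2_apply : ∀ (f : l2) (n : ℤ), V2 f n = ((u (n-1) / u n : ℝ) : ℂ) * f (n + (-1)) :=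
    fun f n => rfl
  -- composition identities
  have hUUinv : U.comp Uinv = 1 := by
    apply ContinuousLinearMap.ext; intro f
    apply lp.ext; funext n
    have h1 : (U.comp Uinv) f n = ((u n / u (n-1) : ℝ) : ℂ) * (Uinv f (n-1)) := hU (Uinv f) n
    rw [h1, hUinv_apply f (n-1), show n - 1 + 1 = n by ring, ← mul_assoc,
      ← Complex.ofReal_mul, show (u n / u (n-1)) * (u (n-1) / u n) = 1 by
        rw [div_mul_div_comm, mul_comm (u n) (u (n-1))]
        exact div_self (mul_ne_zero (hune _) (hune _))]
    simp [ContinuousLinearMap.one_apply]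
  have hUinvU : Uinv.comp U = 1 := by
    apply ContinuousLinearMap.ext; intro f
    apply lp.ext; funext n
    have h1 : (Uinv.comp U) f n = ((u n / u (n+1) : ℝ) : ℂ) * (U f (n+1)) := hUinv_apply (U f) n
    rw [h1, hU f (n+1), show n + 1 - 1 = n by ring, ← mul_assoc,
      ← Complex.ofReal_mul, show (u n / u (n+1)) * (u (n+1) / u n) = 1 by
        rw [div_mul_div_comm, mul_comm (u n) (u (n+1))]
        exact div_self (mul_ne_zero (hune _) (hune _))]
    simp [ContinuousLinearMap.one_apply]
  -- adjoint identities
  have hadjU : adjoint U = V1 := by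
    refine ((ContinuousLinearMap.eq_adjoint_iff V1 U).2 ?_).symm
    intro x y
    rw [lp.inner_eq_tsum, lp.inner_eq_tsum,
      ← Equiv.tsum_eq (Equiv.addRight (1:ℤ)) (fun n => (inner ℂ (x n) ((U y) n) : ℂ))]
    apply tsum_congr
    intro n
    simp only [Equiv.coe_addRight]
    rw [hV1_apply x n, hU y (n+1), show n + 1 - 1 = n by ring]
    simp only [RCLike.inner_apply, map_mul, Complex.conj_ofReal]
    ring
  have hadjUinv : adjoint Uinv = V2 := by
    refine ((ContinuousLinearMap.eq_adjoint_iff V2 Uinv).2 ?_).symm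
    intro x y
    rw [lp.inner_eq_tsum, lp.inner_eq_tsum,
      ← Equiv.tsum_eq (Equiv.subRight (1:ℤ)) (fun n => (inner ℂ (x n) ((Uinv y) n) : ℂ))]
    apply tsum_congr
    intro n
    simp only [Equiv.subRight_apply]
    rw [hV2_apply x n, hUinv_apply y (n-1), show n - 1 + 1 = n by ring,
      show n + (-1:ℤ) = n - 1 by ring]
    simp only [RCLike.inner_apply, map_mul, Complex.conj_ofReal]
    ring
  -- value of `u` at the special points
  have hval : ∀ (n : ℤ) (j : ℕ), |(n:ℝ)| = 2^j - 1 →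
      u n = (c+2) ^ ((2^j - 1 : ℝ) * Real.sin (π/2 * (j:ℝ))) := by
    intro n j hj
    rw [hu n, hj, logb_val j _ rfl]
  -- the pointwise formulas needed for `splus_case`
  have hTU : ∀ (f : l2) (n : ℤ), U f n = ((u n / u (n + (-1)) : ℝ) : ℂ) * f (n + (-1)) := by
    intro f n
    rw [show n + (-1:ℤ) = n - 1 by ring]
    exact hU f n
  have hTUinv : ∀ (f : l2) (n : ℤ), Uinv f n = ((u n / u (n + 1) : ℝ) : ℂ) * f (n + 1) :=
    hUinv_apply
  have hTV1 : ∀ (f : l2) (n : ℤ),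
      V1 f n = (((fun n => (u n)⁻¹) n / (fun n => (u n)⁻¹) (n + 1) : ℝ) : ℂ) * f (n + 1) := by
    intro f n
    rw [hV1_apply f n]
    congr 2
    show u (n+1) / u n = (u n)⁻¹ / (u (n+1))⁻¹
    rw [inv_div_inv]
  have hTV2 : ∀ (f : l2) (n : ℤ),
      V2 f n = (((fun n => (u n)⁻¹) n / (fun n => (u n)⁻¹) (n + (-1)) : ℝ) : ℂ) * f (n + (-1)) := by
    intro f n
    rw [hV2_apply f n]
    congr 2
    show u (n-1) / u n = (u n)⁻¹ / (u (n + (-1)))⁻¹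
    rw [inv_div_inv, show n + (-1:ℤ) = n - 1 by ring]
  refine ⟨Uinv, hUUinv, hUinvU, ?_, ?_, ?_, ?_⟩
  · exact splus_case c hc u hupos hval U u (-1) (Or.inr rfl) 1 (Or.inl ⟨rfl, rfl⟩) hTU
  · rw [hadjUinv]
    exact splus_case c hc u hupos hval V2 (fun n => (u n)⁻¹) (-1) (Or.inr rfl) 3
      (Or.inr ⟨rfl, rfl⟩) hTV2
  · exact splus_case c hc u hupos hval Uinv u 1 (Or.inl rfl) 1 (Or.inl ⟨rfl, rfl⟩) hTUinv
  · rw [hadjU]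
    exact splus_case c hc u hupos hval V1 (fun n => (u n)⁻¹) 1 (Or.inl rfl) 3
      (Or.inr ⟨rfl, rfl⟩) hTV1
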